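/- arXiv:1602.00986 — 7 statements merged into one kernel-verified Lean document; each statement's English description precedes it below -/
import Mathlib

section
/- Let C > 0, Γ > 0, and let p, q : ℝ → ℝ be differentiable on [0, C] with p(V), q(V) ∈ [0,1], r(V) := p(V) + q(V) − p(V)q(V) > 0, p′(V) ≥ 0 and q′(V) ≤ 0 for all V ∈ [0, C]. Then M(V) = Γ·[(C − V)·p(V)/r(V) + V] satisfies M′(V) ≥ 0 for all V ∈ [0, C]; in particular M is nondecreasing on [0, C]. -/
/-- If `p, q` are differentiable on `[0, C]` with `p, q ∈ [0,1]`,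
`r := p + q − pq > 0`, `p′ ≥ 0` and `q′ ≤ 0` there, then
`M(V) = Γ[(C − V)p(V)/r(V) + V]` has nonnegative derivative on `[0, C]`;
in particular `M` is nondecreasing on `[0, C]`. -/
theorem stmt_6 (C Γ : ℝ) (p q p' q' : ℝ → ℝ)
    (hC : 0 < C) (hΓ : 0 < Γ)
    (hp : ∀ V ∈ Set.Icc (0:ℝ) C, HasDerivAt p (p' V) V)
    (hq : ∀ V ∈ Set.Icc (0:ℝ) C, HasDerivAt q (q' V) V)
    (hp01 : ∀ V ∈ Set.Icc (0:ℝ) C, p V ∈ Set.Icc (0:ℝ) 1)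
    (hq01 : ∀ V ∈ Set.Icc (0:ℝ) C, q V ∈ Set.Icc (0:ℝ) 1)
    (hr : ∀ V ∈ Set.Icc (0:ℝ) C, 0 < p V + q V - p V * q V)
    (hp' : ∀ V ∈ Set.Icc (0:ℝ) C, 0 ≤ p' V)
    (hq' : ∀ V ∈ Set.Icc (0:ℝ) C, q' V ≤ 0) :
    (∀ V ∈ Set.Icc (0:ℝ) C,
      0 ≤ deriv (fun v => Γ * ((C - v) * p v / (p v + q v - p v * q v) + v)) V) ∧
    MonotoneOn (fun v => Γ * ((C - v) * p v / (p v + q v - p v * q v) + v))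
      (Set.Icc (0:ℝ) C) := by
  set f : ℝ → ℝ := fun v => Γ * ((C - v) * p v / (p v + q v - p v * q v) + v) with hf
  have hD : ∀ V ∈ Set.Icc (0:ℝ) C, HasDerivAt f
      (Γ * ((((-1) * p V + (C - V) * p' V) * (p V + q V - p V * q V) -
        (C - V) * p V * (p' V + q' V - (p' V * q V + p V * q' V))) /
          (p V + q V - p V * q V) ^ 2 + 1)) V := by
    intro V hV
    have h1 : HasDerivAt (fun v => C - v) (-1) V := by
      simpa using (hasDerivAt_id V).const_sub C
    have h2 := h1.mul (hp V hV)
    have hrd : HasDerivAt (fun v => p v + q v - p v * q v)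
        (p' V + q' V - (p' V * q V + p V * q' V)) V :=
      ((hp V hV).add (hq V hV)).sub ((hp V hV).mul (hq V hV))
    have h3 := (h2.div hrd (ne_of_gt (hr V hV))).add (hasDerivAt_id V)
    have h4 := h3.const_mul Γ
    simpa [f] using h4
  have hnn : ∀ V ∈ Set.Icc (0:ℝ) C,
      0 ≤ Γ * ((((-1) * p V + (C - V) * p' V) * (p V + q V - p V * q V) -
        (C - V) * p V * (p' V + q' V - (p' V * q V + p V * q' V))) /
          (p V + q V - p V * q V) ^ 2 + 1) := by
    intro V hV
    set a := p V; set b := q V; set a' := p' V; set b' := q' V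
    set r := a + b - a * b with hrdef
    have hrpos : 0 < r := hr V hV
    have ht : 0 ≤ C - V := by linarith [hV.2]
    obtain ⟨ha0, ha1⟩ := hp01 V hV
    obtain ⟨hb0, hb1⟩ := hq01 V hV
    have ha' := hp' V hV
    have hb' := hq' V hV
    set A := ((-1) * a + (C - V) * a') * r - (C - V) * a * (a' + b' - (a' * b + a * b'))
    have key : A + r ^ 2 = r * (b * (1 - a)) + (C - V) * (a' * b + b' * (a * (a - 1))) := by
      simp only [A, hrdef]; ring
    have hkey : 0 ≤ A + r ^ 2 := by
      rw [key]
      have h5 : 0 ≤ r * (b * (1 - a)) :=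
        mul_nonneg hrpos.le (mul_nonneg hb0 (by linarith))
      have h6 : 0 ≤ a' * b + b' * (a * (a - 1)) := by
        have h7 : 0 ≤ a' * b := mul_nonneg ha' hb0
        have h8 : 0 ≤ (-b') * (a * (1 - a)) :=
          mul_nonneg (neg_nonneg.mpr hb') (mul_nonneg ha0 (by linarith))
        nlinarith [h7, h8]
      positivity
    have heq : A / r ^ 2 + 1 = (A + r ^ 2) / r ^ 2 := by
      field_simp
    have : 0 ≤ A / r ^ 2 + 1 := by
      rw [heq]; exact div_nonneg hkey (sq_nonneg r)
    exact mul_nonneg hΓ.le this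
  constructor
  · intro V hV
    rw [(hD V hV).deriv]
    exact hnn V hV
  · have hcont : ContinuousOn f (Set.Icc 0 C) := fun V hV =>
      ((hD V hV).continuousAt).continuousWithinAt
    have hdiff : DifferentiableOn ℝ f (interior (Set.Icc (0:ℝ) C)) := by
      intro V hV
      rw [interior_Icc] at hV
      exact ((hD V (Set.Ioo_subset_Icc_self hV)).differentiableAt).differentiableWithinAt
    refine monotoneOn_of_deriv_nonneg (convex_Icc 0 C) hcont hdiff ?_
    intro V hV
    rw [interior_Icc] at hV
    have hV' := Set.Ioo_subset_Icc_self hV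
    rw [(hD V hV').deriv]
    exact hnn V hV'
end

section
/- Let C > 0, Γ > 0, and let p, q : ℝ → ℝ be twice differentiable on [0, C] with p(V), q(V) ∈ [0,1] and r(V) := p(V) + q(V) − p(V)q(V) > 0. Assume on [0, C] that p′ ≥ 0 and p″ ≤ 0 (p increasing and concave), q′ ≤ 0 and q″ ≥ 0 (q decreasing and convex), and r′ ≥ 0 (r increasing). Then M(V) = Γ·[(C − V)·p(V)/r(V) + V] satisfies M″(V) ≤ 0 for all V ∈ [0, C]; in particular M is concave on [0, C]. -/
lemma stmt_7_aux (Γ a b a1 b1 a2 b2 w : ℝ) (hΓ : 0 ≤ Γ) (ha0 : 0 ≤ a)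
    (ha1 : a ≤ 1) (hb0 : 0 ≤ b) (ha1' : 0 ≤ a1) (hb1' : b1 ≤ 0) (ha2 : a2 ≤ 0)
    (hb2 : 0 ≤ b2) (hw : 0 ≤ w) (hrpos : 0 < a + b - a * b)
    (hr1 : 0 ≤ a1 + b1 - a1 * b - a * b1) :
    Γ * (((((-1) * a1 + ((-1) * a1 + w * a2)) * (a + b - a * b) +
          ((-1) * a + w * a1) * (a1 + b1 - (a1 * b + a * b1)) -
         (((-1) * a + w * a1) * (a1 + b1 - (a1 * b + a * b1)) +
          w * a * (a2 + b2 - (a2 * b + a1 * b1 + (a1 * b1 + a * b2))))) *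
        (a + b - a * b) ^ 2 -
        (((-1) * a + w * a1) * (a + b - a * b) - w * a * (a1 + b1 - (a1 * b + a * b1))) *
        (2 * (a + b - a * b) * (a1 + b1 - (a1 * b + a * b1)))) /
       ((a + b - a * b) ^ 2) ^ 2) ≤ 0 := by
  have hK : 0 ≤ a1 * b - (1 - a) * (a * b1) := by
    have h1 := mul_nonneg ha1' hb0
    have h2 : (1 - a) * (a * b1) ≤ 0 :=
      mul_nonpos_of_nonneg_of_nonpos (by linarith)
        (mul_nonpos_of_nonneg_of_nonpos ha0 hb1')
    linarith
  have hsum2 : a2 * b - (1 - a) * (a * b2) + 2 * (a * a1) * b1 ≤ 0 := by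
    have h2 : a2 * b ≤ 0 := mul_nonpos_of_nonpos_of_nonneg ha2 hb0
    have h3 : 0 ≤ (1 - a) * (a * b2) :=
      mul_nonneg (by linarith) (mul_nonneg ha0 hb2)
    have h4 : (a * a1) * b1 ≤ 0 :=
      mul_nonpos_of_nonneg_of_nonpos (mul_nonneg ha0 ha1') hb1'
    linarith
  have hs1 : (-2 * (a + b - a * b)) * (a1 * b - (1 - a) * (a * b1)) ≤ 0 :=
    mul_nonpos_of_nonpos_of_nonneg (by linarith) hK
  have hs2 : (w * (a + b - a * b)) * (a2 * b - (1 - a) * (a * b2) + 2 * (a * a1) * b1) ≤ 0 :=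
    mul_nonpos_of_nonneg_of_nonpos (mul_nonneg hw hrpos.le) hsum2
  have hs3 : 0 ≤ (2 * w * (a1 + b1 - (a1 * b + a * b1))) * (a1 * b - (1 - a) * (a * b1)) :=
    mul_nonneg (by nlinarith) hK
  have hNUM : ((((-1) * a1 + ((-1) * a1 + w * a2)) * (a + b - a * b) +
          ((-1) * a + w * a1) * (a1 + b1 - (a1 * b + a * b1)) -
         (((-1) * a + w * a1) * (a1 + b1 - (a1 * b + a * b1)) +
          w * a * (a2 + b2 - (a2 * b + a1 * b1 + (a1 * b1 + a * b2))))) *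
        (a + b - a * b) ^ 2 -
        (((-1) * a + w * a1) * (a + b - a * b) - w * a * (a1 + b1 - (a1 * b + a * b1))) *
        (2 * (a + b - a * b) * (a1 + b1 - (a1 * b + a * b1)))) ≤ 0 := by
    have hd : ((((-1) * a1 + ((-1) * a1 + w * a2)) * (a + b - a * b) +
          ((-1) * a + w * a1) * (a1 + b1 - (a1 * b + a * b1)) -
         (((-1) * a + w * a1) * (a1 + b1 - (a1 * b + a * b1)) +
          w * a * (a2 + b2 - (a2 * b + a1 * b1 + (a1 * b1 + a * b2))))) *
        (a + b - a * b) ^ 2 -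
        (((-1) * a + w * a1) * (a + b - a * b) - w * a * (a1 + b1 - (a1 * b + a * b1))) *
        (2 * (a + b - a * b) * (a1 + b1 - (a1 * b + a * b1)))) =
        (a + b - a * b) *
          ((-2 * (a + b - a * b)) * (a1 * b - (1 - a) * (a * b1)) +
           (w * (a + b - a * b)) * (a2 * b - (1 - a) * (a * b2) + 2 * (a * a1) * b1) -
           (2 * w * (a1 + b1 - (a1 * b + a * b1))) * (a1 * b - (1 - a) * (a * b1))) := by
      ring
    rw [hd]
    exact mul_nonpos_of_nonneg_of_nonpos hrpos.le (by linarith)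
  exact mul_nonpos_of_nonneg_of_nonpos hΓ
    (div_nonpos_iff.mpr (Or.inr ⟨hNUM, by positivity⟩))

/-- If `p, q` are twice differentiable on `[0, C]` with `p, q ∈ [0,1]`,
`r := p + q − pq > 0`, `p` increasing and concave (`p′ ≥ 0`, `p″ ≤ 0`),
`q` decreasing and convex (`q′ ≤ 0`, `q″ ≥ 0`), and `r` increasing (`r′ ≥ 0`)
on `[0, C]`, then `M(V) = Γ[(C − V)p(V)/r(V) + V]` has nonpositive second
derivative on `[0, C]`; in particular `M` is concave on `[0, C]`. -/
theorem stmt_7 (C Γ : ℝ) (p q p' q' p'' q'' : ℝ → ℝ)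
    (hC : 0 < C) (hΓ : 0 < Γ)
    (hp : ∀ V ∈ Set.Icc (0:ℝ) C, HasDerivAt p (p' V) V)
    (hq : ∀ V ∈ Set.Icc (0:ℝ) C, HasDerivAt q (q' V) V)
    (hp' : ∀ V ∈ Set.Icc (0:ℝ) C, HasDerivAt p' (p'' V) V)
    (hq' : ∀ V ∈ Set.Icc (0:ℝ) C, HasDerivAt q' (q'' V) V)
    (hp01 : ∀ V ∈ Set.Icc (0:ℝ) C, p V ∈ Set.Icc (0:ℝ) 1)
    (hq01 : ∀ V ∈ Set.Icc (0:ℝ) C, q V ∈ Set.Icc (0:ℝ) 1)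
    (hr : ∀ V ∈ Set.Icc (0:ℝ) C, 0 < p V + q V - p V * q V)
    (hp'pos : ∀ V ∈ Set.Icc (0:ℝ) C, 0 ≤ p' V)
    (hp''neg : ∀ V ∈ Set.Icc (0:ℝ) C, p'' V ≤ 0)
    (hq'neg : ∀ V ∈ Set.Icc (0:ℝ) C, q' V ≤ 0)
    (hq''pos : ∀ V ∈ Set.Icc (0:ℝ) C, 0 ≤ q'' V)
    (hr' : ∀ V ∈ Set.Icc (0:ℝ) C,
      0 ≤ p' V + q' V - p' V * q V - p V * q' V) :
    ∃ M' : ℝ → ℝ,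
      (∀ V ∈ Set.Icc (0:ℝ) C,
        HasDerivAt (fun v => Γ * ((C - v) * p v / (p v + q v - p v * q v) + v))
          (M' V) V) ∧
      (∀ V ∈ Set.Icc (0:ℝ) C, ∃ m2 ≤ (0:ℝ), HasDerivAt M' m2 V) ∧
      ConcaveOn ℝ (Set.Icc (0:ℝ) C)
        (fun v => Γ * ((C - v) * p v / (p v + q v - p v * q v) + v)) := by
  set M' : ℝ → ℝ := fun V => Γ * ((((-1) * p V + (C - V) * p' V) * (p V + q V - p V * q V) -
      (C - V) * p V * (p' V + q' V - (p' V * q V + p V * q' V))) /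
      (p V + q V - p V * q V) ^ 2 + 1) with hM'def
  have hM1 : ∀ V ∈ Set.Icc (0:ℝ) C,
      HasDerivAt (fun v => Γ * ((C - v) * p v / (p v + q v - p v * q v) + v)) (M' V) V := by
    intro V hV
    exact (((((hasDerivAt_id V).const_sub C).mul (hp V hV)).div
      (((hp V hV).add (hq V hV)).sub ((hp V hV).mul (hq V hV)))
      (ne_of_gt (hr V hV))).add (hasDerivAt_id V)).const_mul Γ
  have hM2 : ∀ V ∈ Set.Icc (0:ℝ) C, ∃ m2 ≤ (0:ℝ), HasDerivAt M' m2 V := by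
    intro V hV
    have hpV := hp V hV
    have hqV := hq V hV
    have hp'V := hp' V hV
    have hq'V := hq' V hV
    have hCsub : HasDerivAt (fun v => C - v) (-1) V := (hasDerivAt_id V).const_sub C
    have hrd : HasDerivAt (fun v => p v + q v - p v * q v)
        (p' V + q' V - (p' V * q V + p V * q' V)) V := (hpV.add hqV).sub (hpV.mul hqV)
    have hr1d : HasDerivAt (fun v => p' v + q' v - (p' v * q v + p v * q' v))
        (p'' V + q'' V - (p'' V * q V + p' V * q' V + (p' V * q' V + p V * q'' V))) V :=
      (hp'V.add hq'V).sub ((hp'V.mul hqV).add (hpV.mul hq'V))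
    have hf1 : HasDerivAt (fun v => (-1) * p v + (C - v) * p' v)
        ((-1) * p' V + ((-1) * p' V + (C - V) * p'' V)) V :=
      (hpV.const_mul (-1)).add (hCsub.mul hp'V)
    have hNd : HasDerivAt (fun v => (C - v) * p v) ((-1) * p V + (C - V) * p' V) V :=
      hCsub.mul hpV
    have hA := (hf1.mul hrd).sub (hNd.mul hr1d)
    have hB : HasDerivAt (fun v => (p v + q v - p v * q v) ^ 2)
        (2 * (p V + q V - p V * q V) * (p' V + q' V - (p' V * q V + p V * q' V))) V := by
      have h := hrd.mul hrd
      have heq : (fun v => (p v + q v - p v * q v) ^ 2) =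
          fun v => (p v + q v - p v * q v) * (p v + q v - p v * q v) := by
        funext v; ring
      rw [heq]
      exact h.congr_deriv (by ring)
    have hBne : (p V + q V - p V * q V) ^ 2 ≠ 0 := pow_ne_zero 2 (ne_of_gt (hr V hV))
    have hM'd := ((hA.div hB hBne).add_const 1).const_mul Γ
    refine ⟨_, ?_, hM'd⟩
    have hw : 0 ≤ C - V := by linarith [hV.2]
    exact stmt_7_aux Γ (p V) (q V) (p' V) (q' V) (p'' V) (q'' V) (C - V) hΓ.le
      (hp01 V hV).1 (hp01 V hV).2 (hq01 V hV).1 (hp'pos V hV) (hq'neg V hV)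
      (hp''neg V hV) (hq''pos V hV) hw (hr V hV) (hr' V hV)
  refine ⟨M', hM1, hM2, ?_⟩
  apply AntitoneOn.concaveOn_of_deriv (convex_Icc 0 C)
  · exact fun x hx => (hM1 x hx).continuousAt.continuousWithinAt
  · exact fun x hx => ((hM1 x (interior_subset hx)).differentiableAt).differentiableWithinAt
  · have hanti : AntitoneOn M' (Set.Icc (0:ℝ) C) := by
      apply antitoneOn_of_deriv_nonpos (convex_Icc 0 C)
      · intro x hx
        obtain ⟨m2, _, hd⟩ := hM2 x hx
        exact hd.continuousAt.continuousWithinAt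
      · intro x hx
        obtain ⟨m2, _, hd⟩ := hM2 x (interior_subset hx)
        exact hd.differentiableAt.differentiableWithinAt
      · intro x hx
        obtain ⟨m2, hle, hd⟩ := hM2 x (interior_subset hx)
        rw [hd.deriv]; exact hle
    intro x hx y hy hxy
    rw [(hM1 x (interior_subset hx)).deriv, (hM1 y (interior_subset hy)).deriv]
    exact hanti (interior_subset hx) (interior_subset hy) hxy
end

section
/- Let d > 0, S₁, S₂ ≥ 0, C > S₁ + S₂, Γ₁, Γ₂ > 0, and set C_s = C − S₁ − S₂. Assume 0 < C_s < d and Γ₁/Γ₂ ≤ (d + 2(S₁ + S₂) − C)/(C + d). Then the allocation V₁ = 0, V₂ = C_s maximizes g(V₁, V₂) = Γ₁·V₁(C + d − V₁)/d + Γ₂·V₂(C + d − V₂)/d over all V₁, V₂ ≥ 0 with V₁ + V₂ = C_s. -/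
/-- Example 1, case 1 (scarce resources): if `0 < C_s < d` and
`Γ₁/Γ₂ ≤ (d + 2(S₁ + S₂) − C)/(C + d)`, then the allocation
`V₁ = 0`, `V₂ = C_s` maximizes
`g(V₁, V₂) = Γ₁V₁(C + d − V₁)/d + Γ₂V₂(C + d − V₂)/d`
over all `V₁, V₂ ≥ 0` with `V₁ + V₂ = C_s`. -/
theorem stmt_9 (C d S1 S2 Γ1 Γ2 : ℝ)
    (hd : 0 < d) (hS1 : 0 ≤ S1) (hS2 : 0 ≤ S2)
    (hC : S1 + S2 < C) (hΓ1 : 0 < Γ1) (hΓ2 : 0 < Γ2)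
    (hCs : C - S1 - S2 < d)
    (hratio : Γ1 / Γ2 ≤ (d + 2 * (S1 + S2) - C) / (C + d)) :
    ∀ V1 V2 : ℝ, 0 ≤ V1 → 0 ≤ V2 → V1 + V2 = C - S1 - S2 →
      Γ1 * V1 * (C + d - V1) / d + Γ2 * V2 * (C + d - V2) / d
        ≤ Γ1 * 0 * (C + d - 0) / d
          + Γ2 * (C - S1 - S2) * (C + d - (C - S1 - S2)) / d := by
  intro V1 V2 hV1 hV2 hsum
  have hCd : (0:ℝ) < C + d := by linarith
  have key : Γ1 * (C + d) ≤ (d + 2 * (S1 + S2) - C) * Γ2 :=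
    (div_le_div_iff₀ hΓ2 hCd).mp hratio
  rw [← add_div, ← add_div, div_le_div_iff₀ hd hd]
  have hV2e : V2 = C - S1 - S2 - V1 := by linarith
  subst hV2e
  nlinarith [mul_nonneg (mul_nonneg hd.le hV1) (sub_nonneg.mpr key),
    mul_nonneg (mul_nonneg hd.le (mul_nonneg hV1 hV1)) (add_pos hΓ1 hΓ2).le]
end

section
/- Let d > 0, S₁, S₂ ≥ 0, C > S₁ + S₂, Γ₁, Γ₂ > 0, and set C_s = C − S₁ − S₂. Assume 0 < C_s < d and Γ₂/Γ₁ ≤ (d + 2(S₁ + S₂) − C)/(C + d). Then the allocation V₁ = C_s, V₂ = 0 maximizes g(V₁, V₂) = Γ₁·V₁(C + d − V₁)/d + Γ₂·V₂(C + d − V₂)/d over all V₁, V₂ ≥ 0 with V₁ + V₂ = C_s. -/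
/-- Example 1, case 2 (scarce resources): if `0 < C_s < d` and
`Γ₂/Γ₁ ≤ (d + 2(S₁ + S₂) − C)/(C + d)`, then the allocation
`V₁ = C_s`, `V₂ = 0` maximizes
`g(V₁, V₂) = Γ₁V₁(C + d − V₁)/d + Γ₂V₂(C + d − V₂)/d`
over all `V₁, V₂ ≥ 0` with `V₁ + V₂ = C_s`. -/
theorem stmt_10 (C d S1 S2 Γ1 Γ2 : ℝ)
    (hd : 0 < d) (hS1 : 0 ≤ S1) (hS2 : 0 ≤ S2)
    (hC : S1 + S2 < C) (hΓ1 : 0 < Γ1) (hΓ2 : 0 < Γ2)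
    (hCs : C - S1 - S2 < d)
    (hratio : Γ2 / Γ1 ≤ (d + 2 * (S1 + S2) - C) / (C + d)) :
    ∀ V1 V2 : ℝ, 0 ≤ V1 → 0 ≤ V2 → V1 + V2 = C - S1 - S2 →
      Γ1 * V1 * (C + d - V1) / d + Γ2 * V2 * (C + d - V2) / d
        ≤ Γ1 * (C - S1 - S2) * (C + d - (C - S1 - S2)) / d
          + Γ2 * 0 * (C + d - 0) / d := by
  intro V1 V2 hV1 hV2 hsum
  have hCd : (0:ℝ) < C + d := by linarith
  have hkey : Γ2 * (C + d) ≤ (d + 2 * (S1 + S2) - C) * Γ1 :=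
    (div_le_div_iff₀ hΓ1 hCd).mp hratio
  rw [← add_div, ← add_div, div_le_div_iff₀ hd hd]
  obtain rfl : V1 = C - S1 - S2 - V2 := by linarith
  have h2 := mul_le_mul_of_nonneg_left hkey hV2
  nlinarith [mul_le_mul_of_nonneg_right h2 hd.le,
    mul_nonneg (mul_nonneg (mul_nonneg hΓ1.le hV2) hV2) hd.le,
    mul_nonneg (mul_nonneg (mul_nonneg hΓ2.le hV2) hV2) hd.le]
end

section
/- Let d > 0, S₁, S₂ ≥ 0, C > S₁ + S₂, Γ₁, Γ₂ > 0, and set C_s = C − S₁ − S₂. Assume 0 < C_s < d, Γ₁/Γ₂ > (d + 2(S₁ + S₂) − C)/(C + d), and Γ₂/Γ₁ > (d + 2(S₁ + S₂) − C)/(C + d). Then the allocation V₁ = ½·(Γ₁(C_s + d + S₁ + S₂) + Γ₂(C_s − d − S₁ − S₂))/(Γ₁ + Γ₂), V₂ = ½·(Γ₁(C_s − d − S₁ − S₂) + Γ₂(C_s + d + S₁ + S₂))/(Γ₁ + Γ₂) satisfies V₁, V₂ ∈ (0, C_s) with V₁ + V₂ = C_s, and it maximizes g(V₁, V₂) = Γ₁·V₁(C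 + d − V₁)/d + Γ₂·V₂(C + d − V₂)/d over all V₁, V₂ ≥ 0 with V₁ + V₂ = C_s. -/
/-- Example 1, case 3 (scarce resources, interior optimum): if `0 < C_s < d`
and both `Γ₁/Γ₂` and `Γ₂/Γ₁` exceed `(d + 2(S₁ + S₂) − C)/(C + d)`, then
`V₁ = ½(Γ₁(C_s + d + S₁ + S₂) + Γ₂(C_s − d − S₁ − S₂))/(Γ₁ + Γ₂)` and
`V₂ = ½(Γ₁(C_s − d − S₁ − S₂) + Γ₂(C_s + d + S₁ + S₂))/(Γ₁ + Γ₂)` lie in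
`(0, C_s)`, sum to `C_s`, and maximize
`g(V₁, V₂) = Γ₁V₁(C + d − V₁)/d + Γ₂V₂(C + d − V₂)/d`
over all `V₁, V₂ ≥ 0` with `V₁ + V₂ = C_s`. -/
theorem stmt_11 (C d S1 S2 Γ1 Γ2 : ℝ)
    (hd : 0 < d) (hS1 : 0 ≤ S1) (hS2 : 0 ≤ S2)
    (hC : S1 + S2 < C) (hΓ1 : 0 < Γ1) (hΓ2 : 0 < Γ2)
    (hCs : C - S1 - S2 < d)
    (hratio1 : (d + 2 * (S1 + S2) - C) / (C + d) < Γ1 / Γ2)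
    (hratio2 : (d + 2 * (S1 + S2) - C) / (C + d) < Γ2 / Γ1) :
    (0 < (1 / 2) * (Γ1 * ((C - S1 - S2) + d + S1 + S2)
            + Γ2 * ((C - S1 - S2) - d - S1 - S2)) / (Γ1 + Γ2) ∧
      (1 / 2) * (Γ1 * ((C - S1 - S2) + d + S1 + S2)
            + Γ2 * ((C - S1 - S2) - d - S1 - S2)) / (Γ1 + Γ2)
          < C - S1 - S2 ∧
      0 < (1 / 2) * (Γ1 * ((C - S1 - S2) - d - S1 - S2)
            + Γ2 * ((C - S1 - S2) + d + S1 + S2)) / (Γ1 + Γ2) ∧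
      (1 / 2) * (Γ1 * ((C - S1 - S2) - d - S1 - S2)
            + Γ2 * ((C - S1 - S2) + d + S1 + S2)) / (Γ1 + Γ2)
          < C - S1 - S2 ∧
      (1 / 2) * (Γ1 * ((C - S1 - S2) + d + S1 + S2)
            + Γ2 * ((C - S1 - S2) - d - S1 - S2)) / (Γ1 + Γ2)
        + (1 / 2) * (Γ1 * ((C - S1 - S2) - d - S1 - S2)
            + Γ2 * ((C - S1 - S2) + d + S1 + S2)) / (Γ1 + Γ2)
          = C - S1 - S2) ∧
    (∀ V1 V2 : ℝ, 0 ≤ V1 → 0 ≤ V2 → V1 + V2 = C - S1 - S2 →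
      Γ1 * V1 * (C + d - V1) / d + Γ2 * V2 * (C + d - V2) / d
        ≤ Γ1 * ((1 / 2) * (Γ1 * ((C - S1 - S2) + d + S1 + S2)
              + Γ2 * ((C - S1 - S2) - d - S1 - S2)) / (Γ1 + Γ2))
            * (C + d - (1 / 2) * (Γ1 * ((C - S1 - S2) + d + S1 + S2)
              + Γ2 * ((C - S1 - S2) - d - S1 - S2)) / (Γ1 + Γ2)) / d
          + Γ2 * ((1 / 2) * (Γ1 * ((C - S1 - S2) - d - S1 - S2)
              + Γ2 * ((C - S1 - S2) + d + S1 + S2)) / (Γ1 + Γ2))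
            * (C + d - (1 / 2) * (Γ1 * ((C - S1 - S2) - d - S1 - S2)
              + Γ2 * ((C - S1 - S2) + d + S1 + S2)) / (Γ1 + Γ2)) / d) := by
  have hCd : (0:ℝ) < C + d := by linarith
  have hG : (0:ℝ) < Γ1 + Γ2 := by linarith
  rw [div_lt_div_iff₀ hCd hΓ2] at hratio1
  rw [div_lt_div_iff₀ hCd hΓ1] at hratio2
  constructor
  · refine ⟨?_, ?_, ?_, ?_, ?_⟩
    · apply div_pos ?_ hG; nlinarith
    · rw [div_lt_iff₀ hG]; nlinarith
    · apply div_pos ?_ hG; nlinarith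
    · rw [div_lt_iff₀ hG]; nlinarith
    · field_simp; ring
  · intro V1 V2 h1 h2 hsum
    have hV2 : V2 = (C - S1 - S2) - V1 := by linarith
    subst hV2
    rw [← add_div, ← add_div, div_le_div_iff_of_pos_right hd]
    have key : 0 ≤ (Γ1 + Γ2) * (2*(Γ1+Γ2)*V1 - (Γ1 * ((C - S1 - S2) + d + S1 + S2)
            + Γ2 * ((C - S1 - S2) - d - S1 - S2)))^2 := by positivity
    field_simp
    nlinarith [key, mul_pos hG hG]
end

section
/- Let 0 < d ≤ C, S₁, S₂ ≥ 0, C > S₁ + S₂, Γ₁, Γ₂ > 0, and set C_s = C − S₁ − S₂. Define Mᵢ(V) = Γᵢ·V(C + d − V)/d for 0 ≤ V ≤ d and Mᵢ(V) = Γᵢ·C for V > d. Assume d ≤ C_s < 2d, Γ₁/Γ₂ < (3d + 2(S₁ + S₂) − C)/(C − d), and Γ₂/Γ₁ < (3d + 2(S₁ + S₂) − C)/(C − d). Then the allocation V₁ = ½·(Γ₁(C_s + d + S₁ + S₂) + Γ₂(C_s − d − S₁ − S₂))/(Γ₁ + Γ₂), V₂ = ½·(Γ₁(C_s − d − S₁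 − S₂) + Γ₂(C_s + d + S₁ + S₂))/(Γ₁ + Γ₂) satisfies V₁, V₂ ∈ [0, d] with V₁ + V₂ = C_s, and it maximizes M₁(V₁) + M₂(V₂) over all V₁, V₂ ≥ 0 with V₁ + V₂ = C_s. -/
/-- Example 1 gross revenue per cycle of a station with maximal gain rate `Γ`
and visit time `V`: `M(V) = Γ·V·(C + d − V)/d` for `V ≤ d` and `M(V) = Γ·C`
for `V > d`. -/
noncomputable def Mrev (C d Γ V : ℝ) : ℝ :=
  if V ≤ d then Γ * V * (C + d - V) / d else Γ * C

lemma Mrev_le_quad (C d Γ V : ℝ) (hd : 0 < d) (hΓ : 0 < Γ)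
    (hV0 : 0 ≤ V) (hVC : V ≤ C) : Mrev C d Γ V ≤ Γ * V * (C + d - V) / d := by
  unfold Mrev
  split_ifs with h
  · exact le_refl _
  · push_neg at h
    rw [le_div_iff₀ hd]
    nlinarith [mul_nonneg (mul_nonneg hΓ.le (by linarith : (0:ℝ) ≤ V - d))
      (by linarith : (0:ℝ) ≤ C - V)]

/-- Example 1, case 4: if `d ≤ C_s < 2d` and both `Γ₁/Γ₂` and `Γ₂/Γ₁` are
less than `(3d + 2(S₁ + S₂) − C)/(C − d)`, then the interior allocation
`V₁ = ½(Γ₁(C_s + d + S₁ + S₂) + Γ₂(C_s − d − S₁ − S₂))/(Γ₁ + Γ₂)`,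
`V₂ = ½(Γ₁(C_s − d − S₁ − S₂) + Γ₂(C_s + d + S₁ + S₂))/(Γ₁ + Γ₂)` lies in
`[0, d]²`, sums to `C_s`, and maximizes `M₁(V₁) + M₂(V₂)` over all
`V₁, V₂ ≥ 0` with `V₁ + V₂ = C_s`. -/
theorem stmt_12 (C d S1 S2 Γ1 Γ2 : ℝ)
    (hd : 0 < d) (hdC : d ≤ C) (hS1 : 0 ≤ S1) (hS2 : 0 ≤ S2)
    (hC : S1 + S2 < C) (hΓ1 : 0 < Γ1) (hΓ2 : 0 < Γ2)
    (hCs1 : d ≤ C - S1 - S2) (hCs2 : C - S1 - S2 < 2 * d)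
    (hratio1 : Γ1 / Γ2 < (3 * d + 2 * (S1 + S2) - C) / (C - d))
    (hratio2 : Γ2 / Γ1 < (3 * d + 2 * (S1 + S2) - C) / (C - d)) :
    (0 ≤ (1 / 2) * (Γ1 * ((C - S1 - S2) + d + S1 + S2)
            + Γ2 * ((C - S1 - S2) - d - S1 - S2)) / (Γ1 + Γ2) ∧
      (1 / 2) * (Γ1 * ((C - S1 - S2) + d + S1 + S2)
            + Γ2 * ((C - S1 - S2) - d - S1 - S2)) / (Γ1 + Γ2) ≤ d ∧
      0 ≤ (1 / 2) * (Γ1 * ((C - S1 - S2) - d - S1 - S2)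
            + Γ2 * ((C - S1 - S2) + d + S1 + S2)) / (Γ1 + Γ2) ∧
      (1 / 2) * (Γ1 * ((C - S1 - S2) - d - S1 - S2)
            + Γ2 * ((C - S1 - S2) + d + S1 + S2)) / (Γ1 + Γ2) ≤ d ∧
      (1 / 2) * (Γ1 * ((C - S1 - S2) + d + S1 + S2)
            + Γ2 * ((C - S1 - S2) - d - S1 - S2)) / (Γ1 + Γ2)
        + (1 / 2) * (Γ1 * ((C - S1 - S2) - d - S1 - S2)
            + Γ2 * ((C - S1 - S2) + d + S1 + S2)) / (Γ1 + Γ2)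
          = C - S1 - S2) ∧
    (∀ V1 V2 : ℝ, 0 ≤ V1 → 0 ≤ V2 → V1 + V2 = C - S1 - S2 →
      Mrev C d Γ1 V1 + Mrev C d Γ2 V2
        ≤ Mrev C d Γ1 ((1 / 2) * (Γ1 * ((C - S1 - S2) + d + S1 + S2)
              + Γ2 * ((C - S1 - S2) - d - S1 - S2)) / (Γ1 + Γ2))
          + Mrev C d Γ2 ((1 / 2) * (Γ1 * ((C - S1 - S2) - d - S1 - S2)
              + Γ2 * ((C - S1 - S2) + d + S1 + S2)) / (Γ1 + Γ2))) := by
  have hA : 0 < Γ1 + Γ2 := by linarith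
  have hAne : Γ1 + Γ2 ≠ 0 := ne_of_gt hA
  have hCd : d < C := by
    rcases lt_or_eq_of_le hdC with h | h
    · exact h
    · exfalso
      rw [← h, sub_self, div_zero] at hratio1
      exact absurd hratio1 (not_lt.2 (le_of_lt (div_pos hΓ1 hΓ2)))
  have h1 : Γ1 * (C - d) < Γ2 * (3 * d + 2 * (S1 + S2) - C) := by
    have := (div_lt_div_iff₀ hΓ2 (by linarith : (0:ℝ) < C - d)).1 hratio1
    linarith
  have h2 : Γ2 * (C - d) < Γ1 * (3 * d + 2 * (S1 + S2) - C) := by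
    have := (div_lt_div_iff₀ hΓ1 (by linarith : (0:ℝ) < C - d)).1 hratio2
    linarith
  set W1 := (1 / 2) * (Γ1 * ((C - S1 - S2) + d + S1 + S2)
            + Γ2 * ((C - S1 - S2) - d - S1 - S2)) / (Γ1 + Γ2) with hW1
  set W2 := (1 / 2) * (Γ1 * ((C - S1 - S2) - d - S1 - S2)
            + Γ2 * ((C - S1 - S2) + d + S1 + S2)) / (Γ1 + Γ2) with hW2
  have hsum : W1 + W2 = C - S1 - S2 := by
    rw [hW1, hW2]; field_simp; ring
  have hW1d : W1 ≤ d := by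
    rw [hW1, div_le_iff₀ hA]; nlinarith
  have hW2d : W2 ≤ d := by
    rw [hW2, div_le_iff₀ hA]; nlinarith
  have hW10 : 0 ≤ W1 := by linarith
  have hW20 : 0 ≤ W2 := by linarith
  refine ⟨⟨hW10, hW1d, hW20, hW2d, hsum⟩, ?_⟩
  intro v1 v2 hv1 hv2 hs
  have hv1C : v1 ≤ C := by linarith
  have hv2C : v2 ≤ C := by linarith
  have hst : Γ1 * (C + d - 2 * W1) = Γ2 * (C + d - 2 * W2) := by
    rw [hW1, hW2]; field_simp; ring
  have hW2' : W2 = (C - S1 - S2) - W1 := by linarith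
  have hv2' : v2 = (C - S1 - S2) - v1 := by linarith
  have key : Γ1 * v1 * (C + d - v1) + Γ2 * v2 * (C + d - v2)
      ≤ Γ1 * W1 * (C + d - W1) + Γ2 * W2 * (C + d - W2) := by
    rw [hW2', hv2']
    rw [hW2'] at hst
    nlinarith [mul_nonneg hA.le (sq_nonneg (W1 - v1)), hst, sq_nonneg (W1 - v1)]
  have hM1 : Mrev C d Γ1 W1 = Γ1 * W1 * (C + d - W1) / d := by
    unfold Mrev; rw [if_pos hW1d]
  have hM2 : Mrev C d Γ2 W2 = Γ2 * W2 * (C + d - W2) / d := by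
    unfold Mrev; rw [if_pos hW2d]
  have b1 := Mrev_le_quad C d Γ1 v1 hd hΓ1 hv1 hv1C
  have b2 := Mrev_le_quad C d Γ2 v2 hd hΓ2 hv2 hv2C
  have hdiv : Γ1 * v1 * (C + d - v1) / d + Γ2 * v2 * (C + d - v2) / d
      ≤ Γ1 * W1 * (C + d - W1) / d + Γ2 * W2 * (C + d - W2) / d := by
    rw [← add_div, ← add_div]
    gcongr
  rw [hM1, hM2]
  linarith
end

section
/- Let C > 0, Γ > 0, ν > 0 and k ∈ (0, 1]. Then the function M(V) = Γ·[ (C − V)·(1 − e^{−νV})/(1 − (1 − k)e^{−νV}) + V ] is nondecreasing and concave on the interval [0, C]. -/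
-- first derivative lemma
lemma aux_d1 (C Γ ν k V : ℝ) (hD : 1 - (1 - k) * Real.exp (-(ν * V)) ≠ 0) :
    HasDerivAt (fun V => Γ * ((C - V) * (1 - Real.exp (-(ν * V)))
          / (1 - (1 - k) * Real.exp (-(ν * V))) + V))
      (Γ * (k * Real.exp (-(ν * V)) *
        ((1 - (1 - k) * Real.exp (-(ν * V))) + (C - V) * ν))
        / (1 - (1 - k) * Real.exp (-(ν * V))) ^ 2) V := by
  set x := Real.exp (-(ν * V)) with hx
  have hexp : HasDerivAt (fun V : ℝ => Real.exp (-(ν * V))) (-ν * x) V := by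
    have h1 : HasDerivAt (fun V : ℝ => -(ν * V)) (-ν) V := by
      simpa [Pi.neg_def] using ((hasDerivAt_id V).const_mul ν).neg
    simpa [hx, mul_comm, Function.comp_def] using (Real.hasDerivAt_exp (-(ν * V))).comp V h1
  have hcv : HasDerivAt (fun V : ℝ => C - V) (-1) V := by
    simpa [Pi.sub_def] using (hasDerivAt_const V C).sub (hasDerivAt_id V)
  have hone : HasDerivAt (fun V : ℝ => 1 - Real.exp (-(ν * V))) (0 - (-ν * x)) V :=
    (hasDerivAt_const V 1).sub hexp
  have hnum : HasDerivAt (fun V : ℝ => (C - V) * (1 - Real.exp (-(ν * V))))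
      ((-1) * (1 - x) + (C - V) * (0 - (-ν * x))) V := hcv.mul hone
  have hden : HasDerivAt (fun V : ℝ => 1 - (1 - k) * Real.exp (-(ν * V)))
      (0 - (1 - k) * (-ν * x)) V :=
    (hasDerivAt_const V 1).sub (hexp.const_mul (1 - k))
  have hdiv := hnum.div hden hD
  have hfull := ((hdiv.add (hasDerivAt_id V)).const_mul Γ)
  refine HasDerivAt.congr_deriv hfull ?_
  simp only [hx]
  field_simp
  have hD' : 1 - Real.exp (-(ν * V)) * (1 - k) ≠ 0 := by rw [mul_comm]; exact hD
  field_simp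
  ring

-- second derivative lemma
lemma aux_d2 (C Γ ν k V : ℝ) (hD : 1 - (1 - k) * Real.exp (-(ν * V)) ≠ 0) :
    HasDerivAt (fun V => Γ * (k * Real.exp (-(ν * V)) *
        ((1 - (1 - k) * Real.exp (-(ν * V))) + (C - V) * ν))
        / (1 - (1 - k) * Real.exp (-(ν * V))) ^ 2)
      (-(Γ * k * ν * Real.exp (-(ν * V)) *
          ((1 - (1 - k) * Real.exp (-(ν * V))) ^ 2
            + (1 - k) * Real.exp (-(ν * V)) * (1 - (1 - k) * Real.exp (-(ν * V)))
            + (1 - (1 - k) * Real.exp (-(ν * V)))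
            + (C - V) * ν * ((1 - (1 - k) * Real.exp (-(ν * V)))
                + 2 * (1 - k) * Real.exp (-(ν * V)))))
        / (1 - (1 - k) * Real.exp (-(ν * V))) ^ 3) V := by
  set x := Real.exp (-(ν * V)) with hx
  have hexp : HasDerivAt (fun V : ℝ => Real.exp (-(ν * V))) (-ν * x) V := by
    have h1 : HasDerivAt (fun V : ℝ => -(ν * V)) (-ν) V := by
      simpa [Pi.neg_def] using ((hasDerivAt_id V).const_mul ν).neg
    simpa [hx, mul_comm, Function.comp_def] using (Real.hasDerivAt_exp (-(ν * V))).comp V h1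
  have hcv : HasDerivAt (fun V : ℝ => (C - V) * ν) ((-1) * ν) V := by
    exact ((hasDerivAt_const V C).sub (hasDerivAt_id V)).congr_deriv (by ring) |>.mul_const ν
  have hden : HasDerivAt (fun V : ℝ => 1 - (1 - k) * Real.exp (-(ν * V)))
      (0 - (1 - k) * (-ν * x)) V :=
    (hasDerivAt_const V 1).sub (hexp.const_mul (1 - k))
  have hsum : HasDerivAt
      (fun V : ℝ => (1 - (1 - k) * Real.exp (-(ν * V))) + (C - V) * ν)
      ((0 - (1 - k) * (-ν * x)) + (-1) * ν) V := hden.add hcv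
  have hkx : HasDerivAt (fun V : ℝ => k * Real.exp (-(ν * V))) (k * (-ν * x)) V := by
    simpa [mul_comm, mul_assoc] using hexp.const_mul k
  have hNum : HasDerivAt (fun V : ℝ => Γ * (k * Real.exp (-(ν * V)) *
      ((1 - (1 - k) * Real.exp (-(ν * V))) + (C - V) * ν)))
      (Γ * ((k * (-ν * x)) * ((1 - (1 - k) * x) + (C - V) * ν)
        + (k * x) * ((0 - (1 - k) * (-ν * x)) + (-1) * ν))) V :=
    (hkx.mul hsum).const_mul Γ
  have hDen : HasDerivAt (fun V : ℝ => (1 - (1 - k) * Real.exp (-(ν * V))) ^ 2)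
      (2 * (1 - (1 - k) * x) ^ 1 * (0 - (1 - k) * (-ν * x))) V := hden.pow 2
  have hdiv := hNum.div hDen (pow_ne_zero 2 hD)
  refine HasDerivAt.congr_deriv hdiv ?_
  simp only [hx]
  field_simp
  ring

/-- Example 2: for cycle length `C > 0`, gain rate `Γ > 0`, exponential
retrial rate `ν > 0`, and dropping probability `k ∈ (0,1]`, the gross revenue
`M(V) = Γ[(C − V)(1 − e^{−νV})/(1 − (1 − k)e^{−νV}) + V]`
is nondecreasing and concave on `[0, C]`. -/
theorem stmt_17 (C Γ ν k : ℝ)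
    (hC : 0 < C) (hΓ : 0 < Γ) (hν : 0 < ν) (hk0 : 0 < k) (hk1 : k ≤ 1) :
    MonotoneOn
      (fun V => Γ * ((C - V) * (1 - Real.exp (-(ν * V)))
          / (1 - (1 - k) * Real.exp (-(ν * V))) + V))
      (Set.Icc (0:ℝ) C) ∧
    ConcaveOn ℝ (Set.Icc (0:ℝ) C)
      (fun V => Γ * ((C - V) * (1 - Real.exp (-(ν * V)))
          / (1 - (1 - k) * Real.exp (-(ν * V))) + V)) := by
  have hxpos : ∀ V : ℝ, 0 < Real.exp (-(ν * V)) := fun V => Real.exp_pos _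
  have hx1 : ∀ V : ℝ, 0 ≤ V → Real.exp (-(ν * V)) ≤ 1 := by
    intro V hV
    apply Real.exp_le_one_iff.2
    nlinarith
  have hDk : ∀ V : ℝ, 0 ≤ V → k ≤ 1 - (1 - k) * Real.exp (-(ν * V)) := by
    intro V hV
    nlinarith [hx1 V hV, (hxpos V).le]
  have hDpos : ∀ V : ℝ, 0 ≤ V → 0 < 1 - (1 - k) * Real.exp (-(ν * V)) :=
    fun V hV => lt_of_lt_of_le hk0 (hDk V hV)
  have hDne : ∀ V : ℝ, 0 ≤ V → 1 - (1 - k) * Real.exp (-(ν * V)) ≠ 0 :=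
    fun V hV => (hDpos V hV).ne'
  have hcont : ContinuousOn
      (fun V => Γ * ((C - V) * (1 - Real.exp (-(ν * V)))
          / (1 - (1 - k) * Real.exp (-(ν * V))) + V)) (Set.Icc (0:ℝ) C) :=
    fun V hV =>
      ((aux_d1 C Γ ν k V (hDne V hV.1)).differentiableAt.continuousAt).continuousWithinAt
  have hint : interior (Set.Icc (0:ℝ) C) = Set.Ioo (0:ℝ) C := interior_Icc
  constructor
  · apply monotoneOn_of_deriv_nonneg (convex_Icc 0 C) hcont
    · rw [hint]
      exact fun V hV =>
        (aux_d1 C Γ ν k V (hDne V hV.1.le)).differentiableAt.differentiableWithinAt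
    · rw [hint]
      intro V hV
      rw [(aux_d1 C Γ ν k V (hDne V hV.1.le)).deriv]
      apply div_nonneg _ (sq_nonneg _)
      have h1 := hDpos V hV.1.le
      have h2 := hxpos V
      have h3 : 0 ≤ C - V := by linarith [hV.2.le]
      exact mul_nonneg hΓ.le (mul_nonneg (mul_nonneg hk0.le h2.le)
        (add_nonneg h1.le (mul_nonneg h3 hν.le)))
  · apply concaveOn_of_hasDerivWithinAt2_nonpos (convex_Icc 0 C) hcont
      (f' := fun V => Γ * (k * Real.exp (-(ν * V)) *
        ((1 - (1 - k) * Real.exp (-(ν * V))) + (C - V) * ν))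
        / (1 - (1 - k) * Real.exp (-(ν * V))) ^ 2)
      (f'' := fun V => -(Γ * k * ν * Real.exp (-(ν * V)) *
          ((1 - (1 - k) * Real.exp (-(ν * V))) ^ 2
            + (1 - k) * Real.exp (-(ν * V)) * (1 - (1 - k) * Real.exp (-(ν * V)))
            + (1 - (1 - k) * Real.exp (-(ν * V)))
            + (C - V) * ν * ((1 - (1 - k) * Real.exp (-(ν * V)))
                + 2 * (1 - k) * Real.exp (-(ν * V)))))
        / (1 - (1 - k) * Real.exp (-(ν * V))) ^ 3)
    · rw [hint]
      exact fun V hV => (aux_d1 C Γ ν k V (hDne V hV.1.le)).hasDerivWithinAt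
    · rw [hint]
      exact fun V hV => (aux_d2 C Γ ν k V (hDne V hV.1.le)).hasDerivWithinAt
    · rw [hint]
      intro V hV
      apply div_nonpos_of_nonpos_of_nonneg
      · apply neg_nonpos_of_nonneg
        have h1 := hDpos V hV.1.le
        have h2 := hxpos V
        have h3 : 0 ≤ C - V := by linarith [hV.2.le]
        have h4 : (0:ℝ) ≤ 1 - k := by linarith
        have hb : 0 ≤ (1 - (1 - k) * Real.exp (-(ν * V))) ^ 2
            + (1 - k) * Real.exp (-(ν * V)) * (1 - (1 - k) * Real.exp (-(ν * V)))
            + (1 - (1 - k) * Real.exp (-(ν * V)))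
            + (C - V) * ν * ((1 - (1 - k) * Real.exp (-(ν * V)))
                + 2 * (1 - k) * Real.exp (-(ν * V))) := by
          have := sq_nonneg (1 - (1 - k) * Real.exp (-(ν * V)))
          nlinarith [mul_nonneg h4 h2.le, mul_nonneg h3 hν.le]
        exact mul_nonneg (by positivity) hb
      · exact pow_nonneg (hDpos V hV.1.le).le 3
end
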